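/- Let n ≥ 1 and let A ⊆ ℕ be a crisp set, identified with the fuzzy set whose values lie in {0, 1}. Then the complement of A is n-c.e. in the classical sense (i.e., A is classically co-n-c.e.) if and only if the fuzzy complement 1 − A is fuzzy n-c.e. (i.e., A is fuzzy co-n-c.e.). -/

import Mathlib

open Filter

/-- The Σ-mind-change function of a sequence of rationals: starts at `1`,
flips to `-1` on a strict decrease while in increasing mode, and flips back
to `1` on a strict increase while in decreasing mode. -/
def mSigma (g : ℕ → ℚ) : ℕ → ℤ
  | 0 => 1
  | s + 1 =>
      if mSigma g s = 1 then (if g s ≤ g (s + 1) then 1 else -1)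
      else (if g (s + 1) ≤ g s then -1 else 1)

/-- A fuzzy set: a function `ℕ → ℝ` with values in `[0,1]`. -/
def IsFuzzySet (A : ℕ → ℝ) : Prop := ∀ x, 0 ≤ A x ∧ A x ≤ 1

/-- `f` is a Σ⁰₁-approximation of the fuzzy set `A`. -/
def SigmaApprox (f : ℕ → ℕ → ℚ) (A : ℕ → ℝ) : Prop :=
  Computable₂ f ∧ (∀ x s, 0 ≤ f x s ∧ f x s ≤ 1) ∧
    (∀ x s, f x s ≤ f x (s + 1)) ∧
    (∀ x, Tendsto (fun s => (f x s : ℝ)) atTop (nhds (A x)))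

/-- A fuzzy set is computably enumerable if it has a Σ⁰₁-approximation. -/
def FuzzyCE (A : ℕ → ℝ) : Prop := ∃ f : ℕ → ℕ → ℚ, SigmaApprox f A

/-- `f` is a Δ⁰₂-approximation of the fuzzy set `A`. -/
def DeltaApprox (f : ℕ → ℕ → ℚ) (A : ℕ → ℝ) : Prop :=
  Computable₂ f ∧ (∀ x s, 0 ≤ f x s ∧ f x s ≤ 1) ∧
    (∀ x, Tendsto (fun s => (f x s : ℝ)) atTop (nhds (A x)))

/-- A fuzzy set `A` is `n`-c.e. if it has a Δ⁰₂-approximation which starts at `0`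
and changes monotonicity at most `n - 1` times. -/
def FuzzyNCE (n : ℕ) (A : ℕ → ℝ) : Prop :=
  ∃ f : ℕ → ℕ → ℚ, DeltaApprox f A ∧ (∀ x, f x 0 = 0) ∧
    (∀ x, {s | mSigma (f x) (s + 1) ≠ mSigma (f x) s}.Finite ∧
      {s | mSigma (f x) (s + 1) ≠ mSigma (f x) s}.ncard ≤ n - 1)

/-- A crisp set `A ⊆ ℕ` is classically `n`-c.e.: it has a computable `{0,1}`-valued
approximation starting at `0`, converging to the characteristic function of `A`,
with at most `n` changes. -/
def ClassicalNCE (n : ℕ) (A : Set ℕ) : Prop :=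
  ∃ f : ℕ → ℕ → Bool, Computable₂ f ∧ (∀ x, f x 0 = false) ∧
    (∀ x, ∀ᶠ s in atTop, (f x s = true ↔ x ∈ A)) ∧
    (∀ x, {s | f x s ≠ f x (s + 1)}.Finite ∧ {s | f x s ≠ f x (s + 1)}.ncard ≤ n)

namespace CoNCE


open Encodable Denumerable

/-! ### gcd is primitive recursive -/

def gstep : ℕ × ℕ → ℕ × ℕ := fun c => if c.1 = 0 then c else (c.2 % c.1, c.1)

lemma gstep_aux : ∀ (k x y : ℕ), x ≤ k → (gstep^[k] (x, y)).2 = Nat.gcd x y := by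
  intro k
  induction k with
  | zero =>
    intro x y hx
    interval_cases x
    simp [Nat.gcd]
  | succ k ih =>
    intro x y hx
    rw [Function.iterate_succ_apply]
    by_cases h0 : x = 0
    · subst h0
      have h : gstep (0, y) = (0, y) := by simp [gstep]
      rw [h, ih 0 y (Nat.zero_le _)]
    · have h : gstep (x, y) = (y % x, x) := by simp [gstep, h0]
      have hlt : y % x < x := Nat.mod_lt y (Nat.pos_of_ne_zero h0)
      rw [h, ih _ _ (by omega)]
      exact (Nat.gcd_rec x y).symm

lemma primrec_gstep : Primrec gstep :=
  Primrec.ite (Primrec.eq.comp Primrec.fst (Primrec.const 0)) Primrec.id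
    (Primrec.pair (Primrec.nat_mod.comp Primrec.snd Primrec.fst) Primrec.fst)

lemma gcd_eq_iterate (a b : ℕ) : Nat.gcd a b = (gstep^[a] (a, b)).2 :=
  (gstep_aux a a b le_rfl).symm

lemma primrec_gcd : Primrec₂ Nat.gcd := by
  have h : Primrec fun c : ℕ × ℕ => (gstep^[c.1] c).2 :=
    Primrec.snd.comp
      (Primrec.nat_iterate Primrec.fst Primrec.id (primrec_gstep.comp Primrec.snd).to₂)
  have h2 : Primrec fun c : ℕ × ℕ => Nat.gcd c.1 c.2 :=
    h.of_eq fun c => (gcd_eq_iterate c.1 c.2).symm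
  exact h2

/-! ### The set of old codes of rationals -/

/-- Arithmetic characterization of the range of the (original) rational encoding. -/
def Sp (k : ℕ) : Prop := k.unpair.2 ≠ 0 ∧ Nat.gcd ((k.unpair.1 + 1) / 2) k.unpair.2 = 1

instance : DecidablePred Sp := fun k => by unfold Sp; infer_instance

lemma primrecPred_Sp : PrimrecPred Sp := by
  have h1 : Primrec fun k : ℕ => k.unpair.1 := Primrec.fst.comp Primrec.unpair
  have h2 : Primrec fun k : ℕ => k.unpair.2 := Primrec.snd.comp Primrec.unpair
  exact PrimrecPred.and
    (PrimrecPred.not (PrimrecRel.comp Primrec.eq h2 (Primrec.const 0)))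
    (PrimrecRel.comp Primrec.eq
      (primrec_gcd.comp (Primrec.nat_div.comp (Primrec.succ.comp h1) (Primrec.const 2)) h2)
      (Primrec.const 1))

lemma natAbs_eq (z : ℤ) : z.natAbs = (Equiv.intEquivNat z + 1) / 2 := by
  cases z with
  | ofNat m => show m = (2 * m + 1) / 2; omega
  | negSucc m => show m + 1 = (2 * m + 1 + 1) / 2; omega

lemma encode_old_eq (q : ℚ) :
    @Encodable.encode ℚ Rat.instEncodable q = Nat.pair (Equiv.intEquivNat q.num) q.den := rfl

lemma mem_range_iff_Sp (k : ℕ) :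
    k ∈ Set.range (@Encodable.encode ℚ Rat.instEncodable) ↔ Sp k := by
  constructor
  · rintro ⟨q, rfl⟩
    rw [encode_old_eq]
    constructor
    · rw [Nat.unpair_pair]; exact q.den_nz
    · rw [Nat.unpair_pair]
      simpa [← natAbs_eq] using q.reduced
  · rintro ⟨hb, hg⟩
    set a := k.unpair.1 with ha
    set b := k.unpair.2 with hbdef
    set z : ℤ := Equiv.intEquivNat.symm a with hz
    have hza : Equiv.intEquivNat z = a := Equiv.apply_symm_apply _ _
    have habs : z.natAbs = (a + 1) / 2 := by rw [natAbs_eq z, hza]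
    refine ⟨⟨z, b, hb, ?_⟩, ?_⟩
    · rw [Nat.Coprime, habs]; exact hg
    · rw [encode_old_eq]
      show Nat.pair (Equiv.intEquivNat z) b = k
      rw [hza]
      exact Nat.pair_unpair k

/-! ### Counting function -/

lemma primrec_count : Primrec (Nat.count Sp) := by
  have hstep : Primrec₂ fun (s : ℕ) (acc : ℕ) => acc + (if Sp s then 1 else 0) :=
    (Primrec.nat_add.comp Primrec.snd
      (Primrec.ite (primrecPred_Sp.comp Primrec.fst) (Primrec.const 1) (Primrec.const 0))).to₂
  have h := Primrec.nat_rec₁ (f := fun s acc => acc + (if Sp s then 1 else 0)) 0 hstep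
  refine h.of_eq fun m => ?_
  induction m with
  | zero => simp
  | succ m ih => rw [Nat.count_succ, ← ih]

/-! ### The n-th element of `Sp` is computable -/

lemma Sp_infinite : (setOf Sp).Infinite := by
  have : Set.range (@Encodable.encode ℚ Rat.instEncodable) = setOf Sp := by
    ext k; exact mem_range_iff_Sp k
  rw [← this]
  exact Set.infinite_range_of_injective Encodable.encode_injective

lemma computable_nth : Computable (Nat.nth Sp) := by
  have hcnt2 : Computable₂ fun (nm : ℕ) (m : ℕ) => decide (nm < Nat.count Sp (m + 1)) := by
    have : Primrec₂ fun (nm : ℕ) (m : ℕ) => decide (nm < Nat.count Sp (m + 1)) :=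
      (PrimrecRel.comp Primrec.nat_lt Primrec.fst
        (primrec_count.comp (Primrec.succ.comp Primrec.snd))).decide.to₂
    exact this.to_comp
  have hpart : Partrec fun nm : ℕ =>
      Nat.rfind fun m => (decide (nm < Nat.count Sp (m + 1)) : Part Bool) :=
    Partrec.rfind hcnt2.partrec₂
  refine (hpart.of_eq fun nm => ?_)
  apply Part.eq_some_iff.mpr
  apply Nat.mem_rfind.mpr
  constructor
  · have : decide (nm < Nat.count Sp (Nat.nth Sp nm + 1)) = true := by
      rw [Nat.count_nth_succ_of_infinite Sp_infinite]
      simp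
    simp only [Part.coe_some, Part.mem_some_iff]
    exact this.symm
  · intro m hm
    have h1 : Nat.count Sp (m + 1) ≤ Nat.count Sp (Nat.nth Sp nm) :=
      Nat.count_monotone Sp hm
    rw [Nat.count_nth_of_infinite Sp_infinite] at h1
    have : decide (nm < Nat.count Sp (m + 1)) = false := by
      simpa using Nat.not_lt.mpr h1
    simp only [Part.coe_some, Part.mem_some_iff]
    exact this.symm

/-! ### Key identification -/

noncomputable abbrev S : Set ℕ := Set.range (@Encodable.encode ℚ Rat.instEncodable)

instance instInfS : Infinite S :=
  (Set.infinite_range_of_injective Encodable.encode_injective).to_subtype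

lemma step2 (n : ℕ) :
    (@Denumerable.ofNat _ (@Nat.Subtype.denumerable S (Encodable.decidableRangeEncode ℚ) _) n)
      = @Nat.Subtype.ofNat S (Encodable.decidableRangeEncode ℚ) instInfS n := by
  letI := @Nat.Subtype.denumerable S (Encodable.decidableRangeEncode ℚ) instInfS
  apply Denumerable.ofNat_of_decode
  rfl

lemma keyA (n : ℕ) :
    @Encodable.encode ℚ Rat.instEncodable (Denumerable.ofNat ℚ n) = Nat.nth (· ∈ S) n := by
  have h1 : Denumerable.ofNat ℚ n =
      (Encodable.equivRangeEncode ℚ).symm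
        (@Denumerable.ofNat _
          (@Nat.Subtype.denumerable S (Encodable.decidableRangeEncode ℚ) _) n) := rfl
  have hinf : (setOf (· ∈ S)).Infinite := @Set.infinite_coe_iff ℕ S |>.mp instInfS
  rw [Nat.nth_apply_eq_orderIsoOfNat hinf]
  rw [h1, step2]
  have h2 : ∀ x : S,
      @Encodable.encode ℚ Rat.instEncodable ((Encodable.equivRangeEncode ℚ).symm x) = (x : ℕ) :=
    fun x => congrArg Subtype.val ((Encodable.equivRangeEncode ℚ).apply_symm_apply x)
  rw [h2]
  have h3 := @Nat.Subtype.orderIsoOfNat_apply S hinf.to_subtype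
    (Encodable.decidableRangeEncode ℚ) n
  rw [show (@Nat.Subtype.orderIsoOfNat {x | x ∈ S} hinf.to_subtype n : ℕ)
        = (@Nat.Subtype.ofNat S (Encodable.decidableRangeEncode ℚ) hinf.to_subtype n : ℕ)
      from congrArg _ h3]

lemma keyA' (n : ℕ) :
    @Encodable.encode ℚ Rat.instEncodable (Denumerable.ofNat ℚ n) = Nat.nth Sp n := by
  rw [keyA n]
  congr 1
  funext k
  exact propext (mem_range_iff_Sp k)

/-! ### Arithmetic characterization of the threshold -/

lemma half_lt_iff (q : ℚ) :
    (1:ℚ)/2 < q ↔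
      (Equiv.intEquivNat q.num % 2 = 0 ∧ q.den < Equiv.intEquivNat q.num) := by
  have hden : (0:ℚ) < (q.den : ℚ) := by exact_mod_cast q.pos
  have h1 : ((1:ℚ)/2 < q) ↔ (q.den : ℤ) < 2 * q.num := by
    constructor
    · intro h
      have h' : (1:ℚ) * (q.den:ℚ) < (q.num:ℚ) * 2 := by
        rw [← div_lt_div_iff₀ (by norm_num : (0:ℚ) < 2) hden, Rat.num_div_den q]
        exact h
      rw [one_mul, mul_comm] at h'
      exact_mod_cast h'
    · intro h
      have h' : (1:ℚ) * (q.den:ℚ) < (q.num:ℚ) * 2 := by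
        rw [one_mul, mul_comm]
        exact_mod_cast h
      rw [← Rat.num_div_den q]
      rw [← div_lt_div_iff₀ (by norm_num : (0:ℚ) < 2) hden] at h'
      exact h'
  rw [h1]
  cases hq : q.num with
  | ofNat m =>
    have he : Equiv.intEquivNat (Int.ofNat m) = 2 * m := rfl
    rw [he, Int.ofNat_eq_natCast]
    omega
  | negSucc m =>
    have he : Equiv.intEquivNat (Int.negSucc m) = 2 * m + 1 := rfl
    rw [he, Int.negSucc_eq]
    omega

lemma keyB (q : ℚ) :
    Nat.nth Sp (@Encodable.encode ℚ Primcodable.toEncodable q)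
      = @Encodable.encode ℚ Rat.instEncodable q := by
  have h2 := keyA' (@Encodable.encode ℚ Primcodable.toEncodable q)
  have h3 : Denumerable.ofNat ℚ (@Encodable.encode ℚ Primcodable.toEncodable q) = q :=
    Denumerable.ofNat_encode q
  rw [h3] at h2
  exact h2.symm

/-! ### The threshold function on `ℚ` is computable -/

theorem computable_half_lt : Computable fun q : ℚ => decide ((1:ℚ)/2 < q) := by
  have hB : Primrec fun k : ℕ => decide (k.unpair.1 % 2 = 0 ∧ k.unpair.2 < k.unpair.1) := by
    have h1 : Primrec fun k : ℕ => k.unpair.1 := Primrec.fst.comp Primrec.unpair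
    have h2 : Primrec fun k : ℕ => k.unpair.2 := Primrec.snd.comp Primrec.unpair
    exact PrimrecPred.and
      (PrimrecRel.comp Primrec.eq (Primrec.nat_mod.comp h1 (Primrec.const 2)) (Primrec.const 0))
      (PrimrecRel.comp Primrec.nat_lt h2 h1) |>.decide
  have h := (hB.to_comp.comp computable_nth).comp (Computable.encode (α := ℚ))
  refine h.of_eq fun q => ?_
  rw [keyB q, encode_old_eq, Nat.unpair_pair]
  simp only [decide_eq_decide]
  exact (half_lt_iff q).symm



lemma mSigma_succ (g : ℕ → ℚ) (s : ℕ) :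
    mSigma g (s + 1) =
      if mSigma g s = 1 then (if g s ≤ g (s + 1) then 1 else -1)
      else (if g (s + 1) ≤ g s then -1 else 1) := rfl

lemma mSigma_of_lt {g : ℕ → ℚ} {s : ℕ} (h : g s < g (s + 1)) : mSigma g (s + 1) = 1 := by
  rw [mSigma_succ]
  by_cases h1 : mSigma g s = 1
  · rw [if_pos h1, if_pos h.le]
  · rw [if_neg h1, if_neg (not_le.mpr h)]

lemma mSigma_of_gt {g : ℕ → ℚ} {s : ℕ} (h : g (s + 1) < g s) : mSigma g (s + 1) = -1 := by
  rw [mSigma_succ]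
  by_cases h1 : mSigma g s = 1
  · rw [if_pos h1, if_neg (not_le.mpr h)]
  · rw [if_neg h1, if_pos h.le]

lemma mSigma_cases (g : ℕ → ℚ) (s : ℕ) : mSigma g s = 1 ∨ mSigma g s = -1 := by
  induction s with
  | zero => exact Or.inl rfl
  | succ s _ =>
    rw [mSigma_succ]
    by_cases h1 : mSigma g s = 1 <;> by_cases h2 : g s ≤ g (s + 1) <;>
      by_cases h3 : g (s + 1) ≤ g s <;> simp [h1, h2, h3]

lemma mSigma_of_eq {g : ℕ → ℚ} {s : ℕ} (h : g s = g (s + 1)) :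
    mSigma g (s + 1) = mSigma g s := by
  rw [mSigma_succ]
  by_cases h1 : mSigma g s = 1
  · rw [if_pos h1, if_pos h.le, h1]
  · rw [if_neg h1, if_pos h.ge]
    rcases mSigma_cases g s with h2 | h2
    · exact absurd h2 h1
    · exact h2.symm

/-- Generic: ncard bound gives truncated count bound. -/
lemma count_le_of_ncard {p : ℕ → Prop} [DecidablePred p] (hf : {s | p s}.Finite) {k : ℕ}
    (h : {s | p s}.ncard ≤ k) : ∀ s, Nat.count p s ≤ k := by
  intro s
  rw [Nat.count_eq_card_filter_range]
  have hsub : (Finset.range s).filter p ⊆ hf.toFinset := by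
    intro t ht
    rw [Finset.mem_filter] at ht
    rw [Set.Finite.mem_toFinset]
    exact ht.2
  calc ((Finset.range s).filter p).card ≤ hf.toFinset.card := Finset.card_le_card hsub
    _ = {s | p s}.ncard := (Set.ncard_eq_toFinset_card _ hf).symm
    _ ≤ k := h

/-- Generic: uniform truncated count bound gives finiteness and ncard bound. -/
lemma finite_and_ncard_le_of_count {p : ℕ → Prop} [DecidablePred p] {k : ℕ}
    (H : ∀ s, Nat.count p s ≤ k) : {s | p s}.Finite ∧ {s | p s}.ncard ≤ k := by
  have hfin : {s | p s}.Finite := by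
    by_contra hinf
    have hinf : {s | p s}.Infinite := hinf
    have h2 := H (Nat.nth p (k + 1))
    rw [Nat.count_nth_of_infinite hinf] at h2
    omega
  refine ⟨hfin, ?_⟩
  set m := hfin.toFinset.sup id with hm
  have hsub : hfin.toFinset ⊆ (Finset.range (m + 1)).filter p := by
    intro t ht
    rw [Finset.mem_filter, Finset.mem_range]
    refine ⟨?_, (Set.Finite.mem_toFinset hfin).mp ht⟩
    have h3 : id t ≤ m := Finset.le_sup ht
    simp only [id] at h3
    omega
  calc {s | p s}.ncard = hfin.toFinset.card := Set.ncard_eq_toFinset_card _ hfin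
    _ ≤ ((Finset.range (m + 1)).filter p).card := Finset.card_le_card hsub
    _ = Nat.count p (m + 1) := (Nat.count_eq_card_filter_range _ _).symm
    _ ≤ k := H _

/-! ### Forward invariant: boolean sequence to fuzzy approximation -/

lemma fwd_invariant (h : ℕ → Bool) (g : ℕ → ℚ)
    (hg : ∀ u, g u = if h u = true then 1 else 0) (h0 : h 0 = false) :
    ∀ s, (Nat.count (fun u => h u ≠ h (u + 1)) s = 0 →
            mSigma g s = 1 ∧ Nat.count (fun u => mSigma g (u + 1) ≠ mSigma g u) s = 0 ∧
              h s = false)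
       ∧ (Nat.count (fun u => h u ≠ h (u + 1)) s ≠ 0 →
            Nat.count (fun u => mSigma g (u + 1) ≠ mSigma g u) s + 1 ≤
              Nat.count (fun u => h u ≠ h (u + 1)) s
            ∧ mSigma g s = (if h s = true then 1 else -1)) := by
  intro s
  induction s with
  | zero =>
    constructor
    · intro _
      exact ⟨rfl, Nat.count_zero _, h0⟩
    · intro hc
      exact absurd (Nat.count_zero _) hc
  | succ s ih =>
    by_cases hss : h s = h (s + 1)
    · have hgs : g s = g (s + 1) := by rw [hg, hg, hss]
      have hms : mSigma g (s + 1) = mSigma g s := mSigma_of_eq hgs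
      have e1 : Nat.count (fun u => h u ≠ h (u + 1)) (s + 1)
          = Nat.count (fun u => h u ≠ h (u + 1)) s := by
        rw [Nat.count_succ, if_neg (by simp [hss]), add_zero]
      have e2 : Nat.count (fun u => mSigma g (u + 1) ≠ mSigma g u) (s + 1)
          = Nat.count (fun u => mSigma g (u + 1) ≠ mSigma g u) s := by
        rw [Nat.count_succ, if_neg (by simp [hms]), add_zero]
      rw [e1, e2, hms, ← hss]
      exact ih
    · have e1 : Nat.count (fun u => h u ≠ h (u + 1)) (s + 1)
          = Nat.count (fun u => h u ≠ h (u + 1)) s + 1 := by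
        rw [Nat.count_succ, if_pos hss]
      cases hs1 : h s with
      | true =>
        have hs2 : h (s + 1) = false := by
          cases h2 : h (s + 1)
          · rfl
          · exact absurd (by rw [hs1, h2]) hss
        have hgs : g (s + 1) < g s := by
          rw [hg, hg, hs1, hs2]; norm_num
        have hms : mSigma g (s + 1) = -1 := mSigma_of_gt hgs
        have hC0 : Nat.count (fun u => h u ≠ h (u + 1)) s ≠ 0 := by
          intro hz
          exact absurd ((ih.1 hz).2.2) (by rw [hs1]; simp)
        obtain ⟨hle, hsig⟩ := ih.2 hC0
        rw [hs1] at hsig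
        simp only [if_pos rfl] at hsig
        have hmp : mSigma g (s + 1) ≠ mSigma g s := by rw [hms, hsig]; decide
        have e2 : Nat.count (fun u => mSigma g (u + 1) ≠ mSigma g u) (s + 1)
            = Nat.count (fun u => mSigma g (u + 1) ≠ mSigma g u) s + 1 := by
          rw [Nat.count_succ, if_pos hmp]
        constructor
        · intro hz
          rw [e1] at hz
          omega
        · intro _
          refine ⟨by rw [e1, e2]; omega, by rw [hms, hs2]; simp⟩
      | false =>
        have hs2 : h (s + 1) = true := by
          cases h2 : h (s + 1)
          · exact absurd (by rw [hs1, h2]) hss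
          · rfl
        have hgs : g s < g (s + 1) := by
          rw [hg, hg, hs1, hs2]; norm_num
        have hms : mSigma g (s + 1) = 1 := mSigma_of_lt hgs
        constructor
        · intro hz
          rw [e1] at hz
          omega
        · intro _
          refine ⟨?_, by rw [hms, hs2]; simp⟩
          by_cases hC0 : Nat.count (fun u => h u ≠ h (u + 1)) s = 0
          · obtain ⟨hm1, hmp0, _⟩ := ih.1 hC0
            have hmp : ¬ (mSigma g (s + 1) ≠ mSigma g s) := by
              rw [hms, hm1]; simp
            have e2 : Nat.count (fun u => mSigma g (u + 1) ≠ mSigma g u) (s + 1)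
                = Nat.count (fun u => mSigma g (u + 1) ≠ mSigma g u) s := by
              rw [Nat.count_succ, if_neg hmp, add_zero]
            rw [e1, e2, hmp0, hC0]
          · obtain ⟨hle, hsig⟩ := ih.2 hC0
            rw [hs1] at hsig
            simp only [Bool.false_eq_true, if_false] at hsig
            have hmp : mSigma g (s + 1) ≠ mSigma g s := by rw [hms, hsig]; decide
            have e2 : Nat.count (fun u => mSigma g (u + 1) ≠ mSigma g u) (s + 1)
                = Nat.count (fun u => mSigma g (u + 1) ≠ mSigma g u) s + 1 := by
              rw [Nat.count_succ, if_pos hmp]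
            rw [e1, e2]
            omega

lemma fwd_final (h : ℕ → Bool) (g : ℕ → ℚ)
    (hg : ∀ u, g u = if h u = true then 1 else 0) (h0 : h 0 = false) {n : ℕ}
    (hfin : {s | h s ≠ h (s + 1)}.Finite) (hcard : {s | h s ≠ h (s + 1)}.ncard ≤ n) :
    {s | mSigma g (s + 1) ≠ mSigma g s}.Finite ∧
      {s | mSigma g (s + 1) ≠ mSigma g s}.ncard ≤ n - 1 := by
  have hcnt := count_le_of_ncard hfin hcard
  have Hm : ∀ s, Nat.count (fun u => mSigma g (u + 1) ≠ mSigma g u) s ≤ n - 1 := by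
    intro s
    by_cases hC0 : Nat.count (fun u => h u ≠ h (u + 1)) s = 0
    · rw [((fwd_invariant h g hg h0 s).1 hC0).2.1]
      omega
    · have := ((fwd_invariant h g hg h0 s).2 hC0).1
      have := hcnt s
      omega
  exact finite_and_ncard_le_of_count Hm

/-! ### Backward invariant: fuzzy approximation to boolean sequence -/

lemma bwd_invariant (g : ℕ → ℚ) (h : ℕ → Bool)
    (hh : ∀ u, h u = decide ((1:ℚ)/2 < g u)) :
    ∀ s, Nat.count (fun u => h u ≠ h (u + 1)) s ≤
           Nat.count (fun u => mSigma g (u + 1) ≠ mSigma g u) s + 1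
       ∧ (Nat.count (fun u => h u ≠ h (u + 1)) s =
            Nat.count (fun u => mSigma g (u + 1) ≠ mSigma g u) s + 1 →
            mSigma g s = (if h s = true then 1 else -1)) := by
  intro s
  induction s with
  | zero =>
    constructor
    · rw [Nat.count_zero _]; omega
    · intro hc
      rw [Nat.count_zero _, Nat.count_zero _] at hc
      omega
  | succ s ih =>
    have hmono : Nat.count (fun u => mSigma g (u + 1) ≠ mSigma g u) s ≤
        Nat.count (fun u => mSigma g (u + 1) ≠ mSigma g u) (s + 1) :=
      Nat.count_monotone _ (Nat.le_succ s)
    by_cases hss : h s = h (s + 1)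
    · have e1 : Nat.count (fun u => h u ≠ h (u + 1)) (s + 1)
          = Nat.count (fun u => h u ≠ h (u + 1)) s := by
        rw [Nat.count_succ, if_neg (by simp [hss]), add_zero]
      constructor
      · rw [e1]; omega
      · intro heq
        by_cases hmp : mSigma g (s + 1) ≠ mSigma g s
        · have e2 : Nat.count (fun u => mSigma g (u + 1) ≠ mSigma g u) (s + 1)
              = Nat.count (fun u => mSigma g (u + 1) ≠ mSigma g u) s + 1 := by
            rw [Nat.count_succ, if_pos hmp]
          rw [e1, e2] at heq
          have := ih.1
          omega
        · push_neg at hmp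
          have e2 : Nat.count (fun u => mSigma g (u + 1) ≠ mSigma g u) (s + 1)
              = Nat.count (fun u => mSigma g (u + 1) ≠ mSigma g u) s := by
            rw [Nat.count_succ, if_neg (by simp [hmp]), add_zero]
          rw [e1, e2] at heq
          rw [hmp, ← hss]
          exact ih.2 heq
    · have e1 : Nat.count (fun u => h u ≠ h (u + 1)) (s + 1)
          = Nat.count (fun u => h u ≠ h (u + 1)) s + 1 := by
        rw [Nat.count_succ, if_pos hss]
      cases hs1 : h s with
      | false =>
        have hs2 : h (s + 1) = true := by
          cases h2 : h (s + 1)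
          · exact absurd (by rw [hs1, h2]) hss
          · rfl
        have hq1 : ¬ ((1:ℚ)/2 < g s) := by
          have := hh s; rw [hs1] at this
          exact of_decide_eq_false this.symm
        have hq2 : (1:ℚ)/2 < g (s + 1) := by
          have := hh (s + 1); rw [hs2] at this
          exact of_decide_eq_true this.symm
        have hgs : g s < g (s + 1) := lt_of_le_of_lt (not_lt.mp hq1) hq2
        have hms : mSigma g (s + 1) = 1 := mSigma_of_lt hgs
        constructor
        · by_cases heq : Nat.count (fun u => h u ≠ h (u + 1)) s =
              Nat.count (fun u => mSigma g (u + 1) ≠ mSigma g u) s + 1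
          · have hsig := ih.2 heq
            rw [hs1] at hsig
            simp only [Bool.false_eq_true, if_false] at hsig
            have hmp : mSigma g (s + 1) ≠ mSigma g s := by rw [hms, hsig]; decide
            have e2 : Nat.count (fun u => mSigma g (u + 1) ≠ mSigma g u) (s + 1)
                = Nat.count (fun u => mSigma g (u + 1) ≠ mSigma g u) s + 1 := by
              rw [Nat.count_succ, if_pos hmp]
            rw [e1, e2]
            omega
          · have := ih.1
            rw [e1]
            omega
        · intro _
          rw [hms, hs2]
          simp
      | true =>
        have hs2 : h (s + 1) = false := by
          cases h2 : h (s + 1)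
          · rfl
          · exact absurd (by rw [hs1, h2]) hss
        have hq1 : (1:ℚ)/2 < g s := by
          have := hh s; rw [hs1] at this
          exact of_decide_eq_true this.symm
        have hq2 : ¬ ((1:ℚ)/2 < g (s + 1)) := by
          have := hh (s + 1); rw [hs2] at this
          exact of_decide_eq_false this.symm
        have hgs : g (s + 1) < g s := lt_of_le_of_lt (not_lt.mp hq2) hq1
        have hms : mSigma g (s + 1) = -1 := mSigma_of_gt hgs
        constructor
        · by_cases heq : Nat.count (fun u => h u ≠ h (u + 1)) s =
              Nat.count (fun u => mSigma g (u + 1) ≠ mSigma g u) s + 1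
          · have hsig := ih.2 heq
            rw [hs1] at hsig
            simp only [if_pos rfl] at hsig
            have hmp : mSigma g (s + 1) ≠ mSigma g s := by rw [hms, hsig]; decide
            have e2 : Nat.count (fun u => mSigma g (u + 1) ≠ mSigma g u) (s + 1)
                = Nat.count (fun u => mSigma g (u + 1) ≠ mSigma g u) s + 1 := by
              rw [Nat.count_succ, if_pos hmp]
            rw [e1, e2]
            omega
          · have := ih.1
            rw [e1]
            omega
        · intro _
          rw [hms, hs2]
          simp
      
lemma bwd_final (g : ℕ → ℚ) (h : ℕ → Bool)
    (hh : ∀ u, h u = decide ((1:ℚ)/2 < g u)) {n : ℕ} (hn : 1 ≤ n)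
    (hfin : {s | mSigma g (s + 1) ≠ mSigma g s}.Finite)
    (hcard : {s | mSigma g (s + 1) ≠ mSigma g s}.ncard ≤ n - 1) :
    {s | h s ≠ h (s + 1)}.Finite ∧ {s | h s ≠ h (s + 1)}.ncard ≤ n := by
  have hcnt := count_le_of_ncard hfin hcard
  have Hm : ∀ s, Nat.count (fun u => h u ≠ h (u + 1)) s ≤ n := by
    intro s
    have h1 := (bwd_invariant g h hh s).1
    have h2 := hcnt s
    omega
  exact finite_and_ncard_le_of_count Hm


end CoNCE

/-- A crisp set is classically co-`n`-c.e. (its complement is classically `n`-c.e.)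
iff its fuzzy complement `1 - A` is fuzzy `n`-c.e. -/
theorem crisp_classical_co_nce_iff_fuzzy_co_nce (n : ℕ) (hn : 1 ≤ n) (A : Set ℕ) :
    ClassicalNCE n Aᶜ ↔
      FuzzyNCE n (fun x => 1 - (A.indicator fun _ => (1 : ℝ)) x) := by
  constructor
  · rintro ⟨f, hcomp, hf0, hconv, hcnt⟩
    refine ⟨fun x s => if f x s = true then (1:ℚ) else 0, ⟨?_, ?_, ?_⟩, ?_, ?_⟩
    · have hc : Computable fun p : ℕ × ℕ => f p.1 p.2 := hcomp
      have h2 := Computable.cond hc (Computable.const (1:ℚ)) (Computable.const (0:ℚ))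
      exact h2.of_eq fun p => by cases hfp : f p.1 p.2 <;> simp [hfp]
    · intro x s
      by_cases hfx : f x s = true <;> simp [hfx]
    · intro x
      show Tendsto (fun s => (↑(if f x s = true then (1:ℚ) else 0) : ℝ)) atTop
        (nhds (1 - (A.indicator fun _ => (1:ℝ)) x))
      by_cases hx : x ∈ A
      · have hL : 1 - (A.indicator fun _ => (1:ℝ)) x = 0 := by
          simp [Set.indicator_of_mem hx]
        rw [hL]
        refine Tendsto.congr' ?_ tendsto_const_nhds
        have hev : ∀ᶠ s in atTop, f x s = false := by
          filter_upwards [hconv x] with s hs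
          cases hfs : f x s
          · rfl
          · exact absurd (hs.mp hfs) (by simpa using hx)
        filter_upwards [hev] with s hs
        simp [hs]
      · have hL : 1 - (A.indicator fun _ => (1:ℝ)) x = 1 := by
          simp [Set.indicator_of_notMem hx]
        rw [hL]
        refine Tendsto.congr' ?_ tendsto_const_nhds
        have hev : ∀ᶠ s in atTop, f x s = true := by
          filter_upwards [hconv x] with s hs
          exact hs.mpr hx
        filter_upwards [hev] with s hs
        simp [hs]
    · intro x
      simp [hf0 x]
    · intro x
      exact CoNCE.fwd_final (f x) (fun s => if f x s = true then 1 else 0)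
        (fun u => rfl) (hf0 x) (hcnt x).1 (hcnt x).2
  · rintro ⟨g, ⟨hcomp, hbd, hconv⟩, hg0, hflip⟩
    refine ⟨fun x s => decide ((1:ℚ)/2 < g x s), ?_, ?_, ?_, ?_⟩
    · exact CoNCE.computable_half_lt.comp hcomp
    · intro x
      show decide ((1:ℚ)/2 < g x 0) = false
      rw [hg0 x]
      simp only [decide_eq_false_iff_not, not_lt]
      norm_num
    · intro x
      by_cases hx : x ∈ A
      · have hc : Tendsto (fun s => (g x s : ℝ)) atTop (nhds 0) := by
          simpa [Set.indicator_of_mem hx] using hconv x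
        have hev : ∀ᶠ s in atTop, (g x s : ℝ) < (((1:ℚ)/2 : ℚ) : ℝ) :=
          hc.eventually (gt_mem_nhds (by norm_num))
        filter_upwards [hev] with s hs
        have hq : g x s < (1:ℚ)/2 := by exact_mod_cast hs
        show decide ((1:ℚ)/2 < g x s) = true ↔ x ∈ Aᶜ
        rw [decide_eq_true_eq]
        constructor
        · intro hgt
          exact absurd hgt (not_lt.mpr hq.le)
        · intro hmem
          exact absurd hx hmem
      · have hc : Tendsto (fun s => (g x s : ℝ)) atTop (nhds 1) := by
          simpa [Set.indicator_of_notMem hx] using hconv x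
        have hev : ∀ᶠ s in atTop, (((1:ℚ)/2 : ℚ) : ℝ) < (g x s : ℝ) :=
          hc.eventually (lt_mem_nhds (by norm_num))
        filter_upwards [hev] with s hs
        have hq : (1:ℚ)/2 < g x s := by exact_mod_cast hs
        show decide ((1:ℚ)/2 < g x s) = true ↔ x ∈ Aᶜ
        rw [decide_eq_true_eq]
        exact iff_of_true hq hx
    · intro x
      exact CoNCE.bwd_final (g x) (fun s => decide ((1:ℚ)/2 < g x s))
        (fun u => rfl) hn (hflip x).1 (hflip x).2
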